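/- Let (α₁, α₂, β₁, β₂) be a linear contact pair of type (h,k) on a real vector space V of dimension n = 2h+2k+2 with Reeb vectors Z₁, Z₂. Suppose g and g′ are two inner products on V, each associated to the pair with a decomposable structure map: that is, there are linear maps φ, φ′ : V → V with φ² = φ′² = −Id + α₁ ⊗ Z₁ + α₂ ⊗ Z₂, φ(Zᵢ) = φ′(Zᵢ) = 0, both preserving F₁ = ker α₁ ∩ ker β₁ and F₂ = ker α₂ ∩ ker β₂, such that g(X, Zᵢ) = g′(X, Zᵢ) = αᵢ(X), g(X, φY) = (β₁+β₂)(X, Y) and g′(X, φ′Y) = (β₁+β₂)(X, Y) for all X, Y. Then g and g′ have the same volume element up to sign: for any g-orthonormal basis (e₁, …, e_n) of V, the determinant of the Gram matrix (g′(eᵢ, eⱼ)) equals 1. -/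

import Mathlib

open scoped TensorProduct

/-- The wedge product of two real-valued alternating forms (determinant/shuffle convention). -/
noncomputable def wedge {V : Type*} [AddCommGroup V] [Module ℝ V] {a b : ℕ}
    (ω : V [⋀^Fin a]→ₗ[ℝ] ℝ) (η : V [⋀^Fin b]→ₗ[ℝ] ℝ) :
    V [⋀^Fin (a + b)]→ₗ[ℝ] ℝ :=
  AlternatingMap.domDomCongr finSumFinEquiv
    ((TensorProduct.lid ℝ ℝ).toLinearMap.compAlternatingMap (ω.domCoprod η))

/-- A linear functional regarded as an alternating 1-form. -/
noncomputable def oneForm {V : Type*} [AddCommGroup V] [Module ℝ V]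
    (α : V →ₗ[ℝ] ℝ) : V [⋀^Fin 1]→ₗ[ℝ] ℝ :=
  AlternatingMap.ofSubsingleton ℝ V ℝ (0 : Fin 1) α

/-- Wedge powers of an alternating 2-form. -/
noncomputable def wpow {V : Type*} [AddCommGroup V] [Module ℝ V]
    (β : V [⋀^Fin 2]→ₗ[ℝ] ℝ) : (n : ℕ) → V [⋀^Fin (2 * n)]→ₗ[ℝ] ℝ
  | 0 => AlternatingMap.domDomCongr (finCongr (by omega))
      (AlternatingMap.constOfIsEmpty ℝ V (Fin 0) 1)
  | n + 1 => AlternatingMap.domDomCongr (finCongr (by omega : 2 + 2 * n = 2 * (n + 1)))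
      (wedge β (wpow β n))

/-- The top-degree form `α₁ ∧ β₁^h ∧ α₂ ∧ β₂^k`. -/
noncomputable def cpForm {V : Type*} [AddCommGroup V] [Module ℝ V] (h k : ℕ)
    (α₁ α₂ : V →ₗ[ℝ] ℝ) (β₁ β₂ : V [⋀^Fin 2]→ₗ[ℝ] ℝ) :
    V [⋀^Fin (1 + (2 * h + (1 + 2 * k)))]→ₗ[ℝ] ℝ :=
  wedge (oneForm α₁) (wedge (wpow β₁ h) (wedge (oneForm α₂) (wpow β₂ k)))

/-- A linear contact pair of type `(h, k)`:
`α₁ ∧ β₁^h ∧ α₂ ∧ β₂^k ≠ 0`, `β₁^(h+1) = 0` and `β₂^(k+1) = 0`. -/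
structure IsLinearContactPair {V : Type*} [AddCommGroup V] [Module ℝ V] (h k : ℕ)
    (α₁ α₂ : V →ₗ[ℝ] ℝ) (β₁ β₂ : V [⋀^Fin 2]→ₗ[ℝ] ℝ) : Prop where
  top_ne_zero : cpForm h k α₁ α₂ β₁ β₂ ≠ 0
  pow_fst : wpow β₁ (h + 1) = 0
  pow_snd : wpow β₂ (k + 1) = 0

/-- The Reeb conditions for a pair of vectors `(Z₁, Z₂)`:
`α₁(Z₁) = α₂(Z₂) = 1`, `α₁(Z₂) = α₂(Z₁) = 0` and `β₁(Zᵢ, ·) = β₂(Zᵢ, ·) = 0`. -/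
def IsReebPair {V : Type*} [AddCommGroup V] [Module ℝ V]
    (α₁ α₂ : V →ₗ[ℝ] ℝ) (β₁ β₂ : V [⋀^Fin 2]→ₗ[ℝ] ℝ) (Z₁ Z₂ : V) : Prop :=
  α₁ Z₁ = 1 ∧ α₂ Z₂ = 1 ∧ α₁ Z₂ = 0 ∧ α₂ Z₁ = 0 ∧
    β₁.curryLeft Z₁ = 0 ∧ β₂.curryLeft Z₁ = 0 ∧ β₁.curryLeft Z₂ = 0 ∧ β₂.curryLeft Z₂ = 0

/-- An inner product (symmetric positive-definite bilinear form). -/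
def IsInnerProduct {V : Type*} [AddCommGroup V] [Module ℝ V]
    (g : V →ₗ[ℝ] V →ₗ[ℝ] ℝ) : Prop :=
  (∀ x y, g x y = g y x) ∧ ∀ x, x ≠ 0 → 0 < g x x

set_option maxHeartbeats 1000000 in
/-- Any two inner products associated to a given linear contact pair with decomposable
structure maps have the same volume element: the Gram matrix of `g'` in a `g`-orthonormal
basis has determinant `1`. -/
theorem associated_metrics_same_volume {V : Type*} [AddCommGroup V] [Module ℝ V]
    [FiniteDimensional ℝ V] (h k : ℕ) (hdim : Module.finrank ℝ V = 2 * h + 2 * k + 2)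
    (α₁ α₂ : V →ₗ[ℝ] ℝ) (β₁ β₂ : V [⋀^Fin 2]→ₗ[ℝ] ℝ)
    (hcp : IsLinearContactPair h k α₁ α₂ β₁ β₂)
    (Z₁ Z₂ : V) (hZ : IsReebPair α₁ α₂ β₁ β₂ Z₁ Z₂)
    (F₁ F₂ : Submodule ℝ V)
    (hF₁ : F₁ = LinearMap.ker α₁ ⊓ LinearMap.ker β₁.curryLeft)
    (hF₂ : F₂ = LinearMap.ker α₂ ⊓ LinearMap.ker β₂.curryLeft)
    (φ φ' : V →ₗ[ℝ] V)
    (hφsq : ∀ X : V, φ (φ X) = -X + α₁ X • Z₁ + α₂ X • Z₂)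
    (hφ'sq : ∀ X : V, φ' (φ' X) = -X + α₁ X • Z₁ + α₂ X • Z₂)
    (hφZ₁ : φ Z₁ = 0) (hφZ₂ : φ Z₂ = 0) (hφ'Z₁ : φ' Z₁ = 0) (hφ'Z₂ : φ' Z₂ = 0)
    (hφF₁ : ∀ x ∈ F₁, φ x ∈ F₁) (hφF₂ : ∀ x ∈ F₂, φ x ∈ F₂)
    (hφ'F₁ : ∀ x ∈ F₁, φ' x ∈ F₁) (hφ'F₂ : ∀ x ∈ F₂, φ' x ∈ F₂)
    (g g' : V →ₗ[ℝ] V →ₗ[ℝ] ℝ) (hg : IsInnerProduct g) (hg' : IsInnerProduct g')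
    (hgZ₁ : ∀ X : V, g X Z₁ = α₁ X) (hgZ₂ : ∀ X : V, g X Z₂ = α₂ X)
    (hg'Z₁ : ∀ X : V, g' X Z₁ = α₁ X) (hg'Z₂ : ∀ X : V, g' X Z₂ = α₂ X)
    (hgφ : ∀ X Y : V, g X (φ Y) = (β₁ + β₂) ![X, Y])
    (hg'φ' : ∀ X Y : V, g' X (φ' Y) = (β₁ + β₂) ![X, Y]) :
    ∀ e : Module.Basis (Fin (2 * h + 2 * k + 2)) ℝ V,
      (∀ i j, g (e i) (e j) = if i = j then 1 else 0) →
      Matrix.det (Matrix.of fun i j => g' (e i) (e j)) = 1 := by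

  obtain ⟨hZ11, hZ22, hZ12, hZ21, hb11, hb21, hb12, hb22⟩ := hZ
  obtain ⟨hgs, hgp⟩ := hg
  obtain ⟨hg's, hg'p⟩ := hg'
  -- The combined 2-form kills the Reeb vectors.
  have hβZ₁ : ∀ X : V, (β₁ + β₂) ![Z₁, X] = 0 := by
    intro X
    have h1 : β₁.curryLeft Z₁ ![X] = 0 := by rw [hb11]; rfl
    have h2 : β₂.curryLeft Z₁ ![X] = 0 := by rw [hb21]; rfl
    rw [AlternatingMap.curryLeft_apply_apply] at h1 h2
    simp only [AlternatingMap.add_apply]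
    rw [show (![Z₁, X] : Fin 2 → V) = Matrix.vecCons Z₁ ![X] from rfl, h1, h2, add_zero]
  -- α₁, α₂ vanish on the ranges of φ and φ'.
  have hαφ₁ : ∀ X : V, α₁ (φ X) = 0 := fun X => by
    rw [← hgZ₁ (φ X), hgs (φ X) Z₁, hgφ Z₁ X, hβZ₁]
  have hαφ'₁ : ∀ X : V, α₁ (φ' X) = 0 := fun X => by
    rw [← hg'Z₁ (φ' X), hg's (φ' X) Z₁, hg'φ' Z₁ X, hβZ₁]
  have hα₂g : ∀ X : V, α₂ (φ X) = 0 := fun X => by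
    rw [← hgZ₂ (φ X), hgs (φ X) Z₂]
    have h1 : β₁.curryLeft Z₂ ![X] = 0 := by rw [hb12]; rfl
    have h2 : β₂.curryLeft Z₂ ![X] = 0 := by rw [hb22]; rfl
    rw [AlternatingMap.curryLeft_apply_apply] at h1 h2
    rw [hgφ Z₂ X]
    simp only [AlternatingMap.add_apply]
    rw [show (![Z₂, X] : Fin 2 → V) = Matrix.vecCons Z₂ ![X] from rfl, h1, h2, add_zero]
  have hα₂g' : ∀ X : V, α₂ (φ' X) = 0 := fun X => by
    rw [← hg'Z₂ (φ' X), hg's (φ' X) Z₂]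
    have h1 : β₁.curryLeft Z₂ ![X] = 0 := by rw [hb12]; rfl
    have h2 : β₂.curryLeft Z₂ ![X] = 0 := by rw [hb22]; rfl
    rw [AlternatingMap.curryLeft_apply_apply] at h1 h2
    rw [hg'φ' Z₂ X]
    simp only [AlternatingMap.add_apply]
    rw [show (![Z₂, X] : Fin 2 → V) = Matrix.vecCons Z₂ ![X] from rfl, h1, h2, add_zero]
  -- The projection onto the Reeb directions.
  set P : V →ₗ[ℝ] V := α₁.smulRight Z₁ + α₂.smulRight Z₂ with hPdef
  have hPapply : ∀ X : V, P X = α₁ X • Z₁ + α₂ X • Z₂ := fun X => by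
    simp [hPdef]
  -- The comparison operator.
  set T : V →ₗ[ℝ] V := P - φ ∘ₗ φ' with hTdef
  have hT : ∀ X Y : V, g' X Y = g X (T Y) := by
    intro X Y
    have h1 : g X (φ (φ' Y)) = g' X (φ' (φ' Y)) := by
      rw [hgφ X (φ' Y), hg'φ' X (φ' Y)]
    have h2 : g' X (φ' (φ' Y)) = -(g' X Y) + α₁ Y * α₁ X + α₂ Y * α₂ X := by
      rw [hφ'sq Y]
      simp [map_add, map_neg, map_smul, hg'Z₁, hg'Z₂, smul_eq_mul]
    have h3 : g X (T Y) = g X (P Y) - g X (φ (φ' Y)) := by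
      simp [hTdef, map_sub]
    have h4 : g X (P Y) = α₁ Y * α₁ X + α₂ Y * α₂ X := by
      rw [hPapply]
      simp [map_add, map_smul, hgZ₁, hgZ₂, smul_eq_mul]
    rw [h3, h4, h1, h2]; ring
  intro e he
  -- Coordinates w.r.t. a g-orthonormal basis are given by g.
  have hrepr : ∀ (X : V) (i : Fin (2 * h + 2 * k + 2)), g (e i) X = e.repr X i := by
    intro X i
    conv_lhs => rw [← e.sum_repr X]
    rw [map_sum]
    simp only [map_smul, smul_eq_mul, he, mul_ite, mul_one, mul_zero]
    rw [Finset.sum_ite_eq (Finset.univ) i (fun l => e.repr X l)]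
    simp
  set M : Matrix (Fin (2 * h + 2 * k + 2)) (Fin (2 * h + 2 * k + 2)) ℝ :=
    Matrix.of fun i j => g' (e i) (e j) with hMdef
  have hmat : M = LinearMap.toMatrix e e T := by
    ext i j
    rw [LinearMap.toMatrix_apply, ← hrepr]
    exact hT (e i) (e j)
  have hMT : M.det = LinearMap.det T := by rw [hmat, LinearMap.det_toMatrix]
  -- Positivity of the determinant.
  have hMpos : M.PosDef := by
    rw [Matrix.posDef_iff_dotProduct_mulVec]
    constructor
    · ext i j
      simp only [Matrix.conjTranspose_apply, hMdef, Matrix.of_apply, star_trivial]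
      exact hg's (e j) (e i)
    · intro x hx
      have hv : (∑ i, x i • e i) ≠ 0 := by
        intro hzero
        apply hx
        have : e.equivFun.symm x = 0 := by
          rw [Module.Basis.equivFun_symm_apply]; exact hzero
        simpa using (e.equivFun.symm.map_eq_zero_iff).mp this
      have key : dotProduct (star x) (M.mulVec x) = g' (∑ i, x i • e i) (∑ j, x j • e j) := by
        simp only [map_sum, map_smul, smul_eq_mul, LinearMap.coe_sum, Finset.sum_apply,
          LinearMap.smul_apply, dotProduct, Matrix.mulVec, star_trivial, hMdef, Matrix.of_apply]
        apply Finset.sum_congr rfl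
        intro i _
        rw [Finset.mul_sum, Finset.mul_sum]
        apply Finset.sum_congr rfl
        intro j _
        rw [hg's (e j) (e i)]
        ring
      rw [key]
      exact hg'p _ hv
  have hdetpos : 0 < M.det := hMpos.det_pos
  -- Algebraic identities giving (det T)^2 = 1.
  have hPP : ∀ X : V, P (P X) = P X := by
    intro X
    simp only [hPapply, map_add, map_smul]
    rw [hZ11, hZ21, hZ12, hZ22]
    simp
  have hφP : ∀ X : V, φ (P X) = 0 := by
    intro X
    simp only [hPapply, map_add, map_smul, hφZ₁, hφZ₂, smul_zero, add_zero]
  have hφ'P : ∀ X : V, φ' (P X) = 0 := by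
    intro X
    simp only [hPapply, map_add, map_smul, hφ'Z₁, hφ'Z₂, smul_zero, add_zero]
  have hPφ : ∀ X : V, P (φ X) = 0 := by
    intro X
    rw [hPapply, hαφ₁, hα₂g]; simp
  have hPφ' : ∀ X : V, P (φ' X) = 0 := by
    intro X
    rw [hPapply, hαφ'₁, hα₂g']; simp
  have hφsqP : ∀ X : V, φ (φ X) = -X + P X := by
    intro X; rw [hφsq X, hPapply]; abel
  have hφ'sqP : ∀ X : V, φ' (φ' X) = -X + P X := by
    intro X; rw [hφ'sq X, hPapply]; abel
  set R : V →ₗ[ℝ] V := P + P - LinearMap.id with hRdef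
  have hfact : T = (φ - P) ∘ₗ (-(φ' + P)) := by
    ext X
    simp only [hTdef, LinearMap.sub_apply, LinearMap.comp_apply, LinearMap.neg_apply,
      LinearMap.add_apply, map_neg, map_add, hφP, hPφ', hPP]
    abel
  have hsq1 : (φ - P) ∘ₗ (φ - P) = R := by
    ext X
    simp only [hRdef, LinearMap.sub_apply, LinearMap.comp_apply, LinearMap.add_apply,
      LinearMap.id_apply, map_sub, hφsqP, hφP, hPφ, hPP]
    abel
  have hsq2 : (-(φ' + P)) ∘ₗ (-(φ' + P)) = R := by
    ext X
    simp only [hRdef, LinearMap.sub_apply, LinearMap.comp_apply, LinearMap.neg_apply,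
      LinearMap.add_apply, LinearMap.id_apply, map_neg, map_add, hφ'sqP, hφ'P, hPφ', hPP,
      neg_neg]
    abel
  have hRR : R ∘ₗ R = LinearMap.id := by
    ext X
    simp only [hRdef, LinearMap.sub_apply, LinearMap.comp_apply, LinearMap.add_apply,
      LinearMap.id_apply, map_sub, map_add, hPP]
    abel
  have hsqdet : M.det ^ 2 = 1 := by
    have h1 : LinearMap.det T = LinearMap.det (φ - P) * LinearMap.det (-(φ' + P)) := by
      rw [hfact, LinearMap.det_comp]
    have h2 : LinearMap.det (φ - P) * LinearMap.det (φ - P) = LinearMap.det R := by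
      rw [← LinearMap.det_comp, hsq1]
    have h3 : LinearMap.det (-(φ' + P)) * LinearMap.det (-(φ' + P)) = LinearMap.det R := by
      rw [← LinearMap.det_comp, hsq2]
    have h4 : LinearMap.det R * LinearMap.det R = 1 := by
      rw [← LinearMap.det_comp, hRR, LinearMap.det_id]
    rw [hMT]
    calc LinearMap.det T ^ 2
        = (LinearMap.det (φ - P) * LinearMap.det (φ - P)) *
          (LinearMap.det (-(φ' + P)) * LinearMap.det (-(φ' + P))) := by rw [h1]; ring
      _ = LinearMap.det R * LinearMap.det R := by rw [h2, h3]
      _ = 1 := h4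
  nlinarith [hdetpos, hsqdet]
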